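/- Let P ∈ ℝ[x₁,…,xₙ] be a nonzero polynomial with deg(P) = deg_{xₙ}(P) =: d. Then there exists M₀ > 0 such that for each M ≥ M₀, setting Q_M(x) := M(1 + x_{n−1}²)(1 + ‖x‖²)^d, the partial derivative ∂β/∂xₙ of the function β(x) := xₙ(1 − x_{n−1}·P(x)²/Q_M(x)) is strictly positive on the half-space {x ∈ ℝⁿ : x_{n−1} ≤ 0}. -/

import Mathlib

open MvPolynomial

private lemma aux_bound {m : ℕ} (k : ℕ) (R : MvPolynomial (Fin m) ℝ)
    (hR : R.totalDegree ≤ 2 * k) :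
    ∃ C : ℝ, 0 ≤ C ∧ ∀ x : Fin m → ℝ, |eval x R| ≤ C * (1 + ∑ i, x i ^ 2) ^ k := by
  refine ⟨∑ v ∈ R.support, |R.coeff v|, Finset.sum_nonneg fun v _ => abs_nonneg _, fun x => ?_⟩
  have hS : (0:ℝ) ≤ 1 + ∑ i, x i ^ 2 := by positivity
  have hS1 : (1:ℝ) ≤ 1 + ∑ i, x i ^ 2 := by
    have : (0:ℝ) ≤ ∑ i, x i ^ 2 := Finset.sum_nonneg fun i _ => sq_nonneg _
    linarith
  rw [eval_eq]
  refine (Finset.abs_sum_le_sum_abs _ _).trans ?_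
  rw [Finset.sum_mul]
  refine Finset.sum_le_sum fun v hv => ?_
  rw [abs_mul]
  refine mul_le_mul_of_nonneg_left ?_ (abs_nonneg _)
  -- |∏ i in v.support, x i ^ v i| ≤ (1 + ∑ i, x i^2)^k
  refine abs_le_of_sq_le_sq ?_ (by positivity)
  rw [← pow_mul, ← Finset.prod_pow]
  calc ∏ i ∈ v.support, (x i ^ v i) ^ 2
      = ∏ i ∈ v.support, (x i ^ 2) ^ v i := by
        refine Finset.prod_congr rfl fun i _ => ?_
        rw [← pow_mul, ← pow_mul, Nat.mul_comm]
    _ ≤ ∏ i ∈ v.support, (1 + ∑ j, x j ^ 2) ^ v i := by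
        refine Finset.prod_le_prod (fun i _ => by positivity) fun i _ => ?_
        refine pow_le_pow_left₀ (sq_nonneg _) ?_ _
        have : x i ^ 2 ≤ ∑ j, x j ^ 2 :=
          Finset.single_le_sum (fun j _ => sq_nonneg (x j)) (Finset.mem_univ i)
        linarith
    _ = (1 + ∑ j, x j ^ 2) ^ (∑ i ∈ v.support, v i) := Finset.prod_pow_eq_pow_sum _ _ _
    _ ≤ (1 + ∑ j, x j ^ 2) ^ (k * 2) := by
        refine pow_le_pow_right₀ hS1 ?_
        have := MvPolynomial.le_totalDegree hv
        rw [Finsupp.sum] at this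
        omega

private lemma aux_pderiv_deg {m : ℕ} (R : MvPolynomial (Fin m) ℝ) (i : Fin m) :
    (pderiv i R).totalDegree ≤ R.totalDegree - 1 := by
  conv_lhs => rw [R.as_sum]
  rw [map_sum]
  refine (MvPolynomial.totalDegree_finset_sum _ _).trans (Finset.sup_le fun v hv => ?_)
  rw [pderiv_monomial]
  by_cases hvi : v i = 0
  · simp [hvi]
  · refine (MvPolynomial.totalDegree_monomial_le _ _).trans ?_
    have hle := MvPolynomial.le_totalDegree hv
    rw [Finsupp.sum] at hle ⊢
    have hsub : ((v - Finsupp.single i 1).support) ⊆ v.support := by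
      intro j hj
      simp only [Finsupp.mem_support_iff, Finsupp.coe_tsub, Pi.sub_apply] at hj ⊢
      omega
    calc ∑ j ∈ (v - Finsupp.single i 1).support, ((v - Finsupp.single i 1 : Fin m →₀ ℕ) j)
        ≤ ∑ j ∈ v.support, ((v - Finsupp.single i 1 : Fin m →₀ ℕ) j) := by
          refine Finset.sum_le_sum_of_subset_of_nonneg hsub fun j _ hj => ?_
          simp only [Finsupp.mem_support_iff, not_not] at hj
          simp [hj]
      _ ≤ (∑ j ∈ v.support, v j) - 1 := by
          have hiv : i ∈ v.support := Finsupp.mem_support_iff.2 hvi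
          rw [← Finset.sum_erase_add _ _ hiv, ← Finset.sum_erase_add _ _ hiv]
          have h1 : ∑ j ∈ v.support.erase i, ((v - Finsupp.single i 1 : Fin m →₀ ℕ) j)
              = ∑ j ∈ v.support.erase i, v j := by
            refine Finset.sum_congr rfl fun j hj => ?_
            have : j ≠ i := Finset.ne_of_mem_erase hj
            simp [Finsupp.single_apply, this.symm]
          have h2 : ((v - Finsupp.single i 1 : Fin m →₀ ℕ) i) = v i - 1 := by
            simp [Finsupp.single_apply]
          rw [h1, h2]
          omega
      _ ≤ R.totalDegree - 1 := by omega

private lemma aux_pderiv_zero {m : ℕ} (R : MvPolynomial (Fin m) ℝ) (i : Fin m)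
    (h : R.totalDegree = 0) : pderiv i R = 0 := by
  conv_lhs => rw [R.as_sum]
  rw [map_sum]
  refine Finset.sum_eq_zero fun v hv => ?_
  rw [pderiv_monomial]
  have := (MvPolynomial.totalDegree_eq_zero_iff _ R).1 h v hv i
  simp [this]

private lemma aux_eval_update {m : ℕ} (x : Fin m → ℝ) (L : Fin m)
    (R : MvPolynomial (Fin m) ℝ) (t : ℝ) :
    Polynomial.eval t (MvPolynomial.aeval
        (fun i => if i = L then Polynomial.X else Polynomial.C (x i)) R)
      = eval (Function.update x L t) R := by
  induction R using MvPolynomial.induction_on with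
  | C a => simp [Polynomial.algebraMap_eq]
  | add p q hp hq => simp [map_add, hp, hq]
  | mul_X p i hp =>
    rw [map_mul, map_mul, Polynomial.eval_mul, hp, aeval_X, eval_X]
    by_cases h : i = L <;> simp [h, Function.update_apply]

private lemma aux_deriv_aeval {m : ℕ} (x : Fin m → ℝ) (L : Fin m)
    (R : MvPolynomial (Fin m) ℝ) :
    Polynomial.derivative (MvPolynomial.aeval
        (fun i => if i = L then Polynomial.X else Polynomial.C (x i)) R)
      = MvPolynomial.aeval
        (fun i => if i = L then Polynomial.X else Polynomial.C (x i)) (pderiv L R) := by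
  induction R using MvPolynomial.induction_on with
  | C a => simp [Polynomial.algebraMap_eq, pderiv_C]
  | add p q hp hq => simp [map_add, hp, hq]
  | mul_X p i hp =>
    by_cases h : i = L
    · subst h
      simp only [map_mul, aeval_X, if_pos rfl, if_true, eq_self_iff_true, pderiv_mul, pderiv_X_self, map_add,
        Polynomial.derivative_mul, Polynomial.derivative_X, hp, mul_one, map_one]
    · simp only [map_mul, aeval_X, if_neg h, pderiv_mul, pderiv_X_of_ne h, map_add,
        Polynomial.derivative_mul, Polynomial.derivative_C, hp, mul_zero, map_zero, add_zero]

private lemma aux_eval_diff {m : ℕ} (R : MvPolynomial (Fin m) ℝ) :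
    Differentiable ℝ (fun y : Fin m → ℝ => eval y R) := by
  induction R using MvPolynomial.induction_on with
  | C a => simpa using differentiable_const a
  | add p q hp hq => simpa using hp.fun_add hq
  | mul_X p i hp =>
    have hi : Differentiable ℝ (fun y : Fin m → ℝ => y i) :=
      fun y => (ContinuousLinearMap.proj i : (Fin m → ℝ) →L[ℝ] ℝ).differentiableAt
    simpa using hp.fun_mul hi

set_option maxHeartbeats 1000000 in
/-- With Q_M(x) := M(1+x_{n−1}²)(1+‖x‖²)^d, there is M₀ > 0 such that for M ≥ M₀
the partial derivative ∂β/∂xₙ of β(x) := xₙ(1 − x_{n−1}P(x)²/Q_M(x)) is strictly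
positive on {x_{n−1} ≤ 0}. Coordinates in ℝ^{n+2}: x_{n−1} is index n, xₙ the last. -/
theorem stmt_10 (n : ℕ) (P : MvPolynomial (Fin (n + 2)) ℝ) (hP : P ≠ 0)
    (hdeg : P.totalDegree = P.degreeOf (Fin.last (n + 1))) :
    ∃ M₀ > (0 : ℝ), ∀ M : ℝ, M₀ ≤ M → ∀ x : Fin (n + 2) → ℝ, x ⟨n, by omega⟩ ≤ 0 →
      0 < fderiv ℝ
        (fun y : Fin (n + 2) → ℝ =>
          y (Fin.last (n + 1)) *
            (1 - y ⟨n, by omega⟩ * (eval y P) ^ 2 /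
              (M * (1 + (y ⟨n, by omega⟩) ^ 2) * (1 + ∑ k, y k ^ 2) ^ P.totalDegree)))
        x (Pi.single (Fin.last (n + 1)) 1) := by
  classical
  set d : ℕ := P.totalDegree with hd
  set L : Fin (n + 2) := Fin.last (n + 1) with hL
  set J : Fin (n + 2) := ⟨n, by omega⟩ with hJ
  have hJL : J ≠ L := by
    intro h
    have := congrArg Fin.val h
    simp [hJ, hL, Fin.last] at this

  -- the auxiliary polynomial N
  set N : MvPolynomial (Fin (n + 2)) ℝ :=
    (P ^ 2 + C 2 * X L * P * pderiv L P) * (1 + ∑ k, X k ^ 2)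
      - C (2 * (d : ℝ)) * (X L ^ 2 * P ^ 2) with hN
  -- degree of 1 + ∑ X k ^ 2
  have hsum2 : (1 + ∑ k : Fin (n+2), (X k : MvPolynomial (Fin (n+2)) ℝ) ^ 2).totalDegree ≤ 2 := by
    refine (MvPolynomial.totalDegree_add _ _).trans (max_le (by simp [MvPolynomial.totalDegree_one]) ?_)
    refine (MvPolynomial.totalDegree_finset_sum _ _).trans (Finset.sup_le fun k _ => ?_)
    rw [MvPolynomial.totalDegree_X_pow]
  have hNdeg : N.totalDegree ≤ 2 * (d + 1) := by
    rw [hN]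
    refine (MvPolynomial.totalDegree_sub _ _).trans (max_le ?_ ?_)
    · refine (MvPolynomial.totalDegree_mul _ _).trans ?_
      have h1 : (P ^ 2 + C 2 * X L * P * pderiv L P).totalDegree ≤ 2 * d := by
        refine (MvPolynomial.totalDegree_add _ _).trans (max_le ?_ ?_)
        · exact (MvPolynomial.totalDegree_pow _ _).trans (by omega)
        · by_cases hd0 : d = 0
          · have : pderiv L P = 0 := aux_pderiv_zero P L hd0
            simp [this]
          · refine (MvPolynomial.totalDegree_mul _ _).trans ?_
            have h2 : (C 2 * X L * P : MvPolynomial (Fin (n+2)) ℝ).totalDegree ≤ 1 + d := by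
              refine (MvPolynomial.totalDegree_mul _ _).trans ?_
              have : (C 2 * X L : MvPolynomial (Fin (n+2)) ℝ).totalDegree ≤ 1 := by
                refine (MvPolynomial.totalDegree_mul _ _).trans ?_
                simp [MvPolynomial.totalDegree_C, MvPolynomial.totalDegree_X]
              omega
            have h3 := aux_pderiv_deg P L
            rw [← hd] at h3
            omega
      omega
    · refine (MvPolynomial.totalDegree_mul _ _).trans ?_
      have h4 : (X L ^ 2 * P ^ 2 : MvPolynomial (Fin (n+2)) ℝ).totalDegree ≤ 2 + 2 * d := by
        refine (MvPolynomial.totalDegree_mul _ _).trans ?_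
        have := MvPolynomial.totalDegree_pow (X L : MvPolynomial (Fin (n+2)) ℝ) 2
        have := MvPolynomial.totalDegree_pow P 2
        simp only [MvPolynomial.totalDegree_X] at *
        omega
      simp only [MvPolynomial.totalDegree_C]
      omega
  obtain ⟨C₀, hC₀0, hC₀⟩ := aux_bound (d + 1) N hNdeg
  refine ⟨C₀ + 1, by linarith, ?_⟩
  intro M hM x hx
  have hM0 : (0:ℝ) < M := by linarith
  -- the function f
  set f : (Fin (n + 2) → ℝ) → ℝ := fun y =>
    y L * (1 - y J * (eval y P) ^ 2 / (M * (1 + (y J) ^ 2) * (1 + ∑ k, y k ^ 2) ^ d)) with hf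
  show 0 < fderiv ℝ f x (Pi.single L 1)
  -- positivity of the denominator
  have hden : ∀ y : Fin (n + 2) → ℝ, 0 < M * (1 + (y J) ^ 2) * (1 + ∑ k, y k ^ 2) ^ d := by
    intro y
    have h1 : (0:ℝ) < 1 + (y J)^2 := by positivity
    have h2 : (0:ℝ) ≤ ∑ k, y k ^ 2 := Finset.sum_nonneg fun k _ => sq_nonneg _
    have h3 : (0:ℝ) < (1 + ∑ k, y k ^ 2) ^ d := by positivity
    exact mul_pos (mul_pos hM0 h1) h3
  -- differentiability of f
  have hev : Differentiable ℝ fun y : Fin (n+2) → ℝ => eval y P := aux_eval_diff P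
  have hproj : ∀ i : Fin (n+2), Differentiable ℝ fun y : Fin (n+2) → ℝ => y i := fun i z =>
    (ContinuousLinearMap.proj i : (Fin (n+2) → ℝ) →L[ℝ] ℝ).differentiableAt
  have hdiff : DifferentiableAt ℝ f x := by
    have h1 : Differentiable ℝ fun y : Fin (n+2) → ℝ => y J * (eval y P) ^ 2 :=
      (hproj J).mul (hev.pow 2)
    have h2 : Differentiable ℝ fun y : Fin (n+2) → ℝ =>
        M * (1 + (y J) ^ 2) * (1 + ∑ k, y k ^ 2) ^ d := by
      have h21 : Differentiable ℝ fun y : Fin (n+2) → ℝ => M * (1 + (y J)^2) :=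
        (((hproj J).pow 2).const_add 1).const_mul M
      have h22 : Differentiable ℝ fun y : Fin (n+2) → ℝ => ∑ k, y k ^ 2 := by
        apply Differentiable.fun_sum
        intro i _
        exact (hproj i).pow 2
      exact h21.mul ((h22.const_add 1).pow d)
    have hdiv : DifferentiableAt ℝ (fun y : Fin (n+2) → ℝ =>
        y J * (eval y P) ^ 2 * (M * (1 + (y J) ^ 2) * (1 + ∑ k, y k ^ 2) ^ d)⁻¹) x :=
      (h1 x).mul ((h2 x).inv (hden x).ne')
    have hdiv' : DifferentiableAt ℝ (fun y : Fin (n+2) → ℝ =>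
        y J * (eval y P) ^ 2 / (M * (1 + (y J) ^ 2) * (1 + ∑ k, y k ^ 2) ^ d)) x := by
      simpa [div_eq_mul_inv] using hdiv
    exact ((hproj L) x).mul ((differentiableAt_const (1:ℝ)).sub hdiv')
  -- the line through x in direction L
  set u : ℝ → (Fin (n+2) → ℝ) := fun t => Function.update x L t with hu
  set t0 : ℝ := x L with ht0
  have hut0 : u t0 = x := Function.update_eq_self L x
  have hulin : HasDerivAt u (Pi.single L 1) t0 := by
    have : u = fun t => Function.update x L 0 + t • Pi.single L 1 := by
      funext t i
      by_cases h : i = L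
      · subst h; simp [hu]
      · simp [hu, Function.update_apply, h, Pi.single_apply]
    rw [this]
    simpa using ((hasDerivAt_id t0).smul_const (Pi.single L (1:ℝ))).const_add
      (Function.update x L 0)
  have hchain : HasDerivAt (f ∘ u) (fderiv ℝ f x (Pi.single L 1)) t0 := by
    refine HasFDerivAt.comp_hasDerivAt t0 ?_ hulin
    rw [hut0]
    exact hdiff.hasFDerivAt
  -- the one-variable formula
  set q : Polynomial ℝ :=
    MvPolynomial.aeval (fun i => if i = L then Polynomial.X else Polynomial.C (x i)) P with hq
  set a : ℝ := x J with ha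
  set c : ℝ := M * (1 + a ^ 2) with hc
  set s0 : ℝ := 1 + ∑ k ∈ Finset.univ \ {L}, x k ^ 2 with hs0
  have hcpos : 0 < c := mul_pos hM0 (by positivity)
  have hsum_upd : ∀ t : ℝ, (1 + ∑ k, (u t k) ^ 2) = s0 + t ^ 2 := by
    intro t
    have : ∀ k, (u t k) ^ 2 = Function.update (fun j => x j ^ 2) L (t ^ 2) k := by
      intro k
      exact Function.apply_update (fun _ v => v ^ 2) x L t k
    simp only [this]
    rw [Finset.sum_update_of_mem (Finset.mem_univ L)]
    rw [hs0]; ring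
  have hfu : f ∘ u = fun t => t * (1 - a * (Polynomial.eval t q) ^ 2 / (c * (s0 + t ^ 2) ^ d)) := by
    funext t
    have h1 : u t L = t := by simp [hu]
    have h2 : u t J = a := by simp [hu, Function.update_of_ne hJL, ha]
    have h3 : eval (u t) P = Polynomial.eval t q := (aux_eval_update x L P t).symm
    simp only [Function.comp_apply, hf, h1, h2, h3, hsum_upd t, hc]
  -- derivative data
  set p : ℝ := Polynomial.eval t0 q with hp'
  set p' : ℝ := Polynomial.eval t0 (Polynomial.derivative q) with hp''
  set σ : ℝ := s0 + t0 ^ 2 with hσ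
  have hσx : σ = 1 + ∑ k, x k ^ 2 := by rw [hσ, ← hsum_upd t0, hut0]
  have hσ1 : (1:ℝ) ≤ σ := by
    rw [hσx]
    have : (0:ℝ) ≤ ∑ k, x k ^ 2 := Finset.sum_nonneg fun k _ => sq_nonneg _
    linarith
  have hσ0 : (0:ℝ) < σ := by linarith
  have hA : HasDerivAt (fun t => (Polynomial.eval t q) ^ 2) ((2:ℕ) * p ^ 1 * p') t0 :=
    (q.hasDerivAt t0).pow 2
  have hB : HasDerivAt (fun t => (s0 + t ^ 2) ^ d)
      ((d:ℕ) * (s0 + t0 ^ 2) ^ (d - 1) * ((2:ℕ) * t0 ^ 1)) t0 :=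
    ((hasDerivAt_pow 2 t0).const_add s0).pow d
  have hBne : c * (s0 + t0 ^ 2) ^ d ≠ 0 := by
    have : (0:ℝ) < (s0 + t0^2)^d := by rw [← hσ]; positivity
    positivity
  have hdivd := ((hA.const_mul a).div (hB.const_mul c) hBne).const_sub 1
  have hfin := (hasDerivAt_id t0).mul hdivd
  -- identify the derivative
  set G : ℝ := 1 * (1 - a * p ^ 2 / (c * (s0 + t0 ^ 2) ^ d)) +
      t0 * -((a * ((2:ℕ) * p ^ 1 * p') * (c * (s0 + t0 ^ 2) ^ d) -
        a * p ^ 2 * (c * ((d:ℕ) * (s0 + t0 ^ 2) ^ (d - 1) * ((2:ℕ) * t0 ^ 1)))) /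
        (c * (s0 + t0 ^ 2) ^ d) ^ 2) with hG
  have hderiv_eq : fderiv ℝ f x (Pi.single L 1) = G := by
    have h1 : HasDerivAt (f ∘ u) G t0 := by
      rw [hfu]
      exact hfin
    exact hchain.unique h1
  rw [hderiv_eq]
  -- identify p and p'
  have hpx : p = eval x P := by
    rw [hp', hq, aux_eval_update x L P t0]
    exact congrArg (fun z => eval z P) hut0
  have hpx' : p' = eval x (pderiv L P) := by
    rw [hp'', hq, aux_deriv_aeval x L P, aux_eval_update x L (pderiv L P) t0]
    exact congrArg (fun z => eval z (pderiv L P)) hut0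
  have hNval : eval x N = (p ^ 2 + 2 * t0 * p * p') * σ - 2 * (d:ℝ) * t0 ^ 2 * p ^ 2 := by
    rw [hN]
    simp only [map_sub, map_mul, map_add, map_pow, eval_C, eval_X, map_one, map_sum]
    rw [← hpx, ← hpx', ← ht0, ← hσx]
    ring
  have hσd0 : σ ^ d ≠ 0 := by positivity
  clear_value G σ p' p s0 c a q t0 u f N d
  have hGval : G = 1 - a / c * (eval x N / σ ^ (d + 1)) := by
    rw [hG, hNval, ← hσ]
    rcases Nat.eq_zero_or_pos d with hd0 | hd1
    · rw [hd0]
      push_cast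
      field_simp
      ring
    · obtain ⟨e, he⟩ : ∃ e, d = e + 1 := ⟨d - 1, by omega⟩
      rw [he]
      push_cast
      simp only [Nat.add_sub_cancel, pow_succ]
      field_simp
      ring
  rw [hGval]
  have hT : |eval x N / σ ^ (d + 1)| ≤ C₀ := by
    rw [abs_div, abs_of_pos (pow_pos hσ0 _), div_le_iff₀ (pow_pos hσ0 _)]
    calc |eval x N| ≤ C₀ * (1 + ∑ i, x i ^ 2) ^ (d + 1) := hC₀ x
      _ = C₀ * σ ^ (d + 1) := by rw [hσx]
  have hac : |a / c| ≤ 1 / (2 * M) := by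
    rw [abs_div, abs_of_pos hcpos, div_le_div_iff₀ hcpos (by linarith)]
    have h2a : 2 * |a| ≤ 1 + a ^ 2 := by nlinarith [sq_nonneg (|a| - 1), sq_abs a]
    rw [hc]
    nlinarith [abs_nonneg a]
  have hfinal : a / c * (eval x N / σ ^ (d + 1)) < 1 := by
    calc a / c * (eval x N / σ ^ (d + 1)) ≤ |a / c * (eval x N / σ ^ (d + 1))| := le_abs_self _
      _ = |a / c| * |eval x N / σ ^ (d + 1)| := abs_mul _ _
      _ ≤ 1 / (2 * M) * C₀ :=
        mul_le_mul hac hT (abs_nonneg _) (le_of_lt (one_div_pos.2 (by linarith)))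
      _ < 1 := by
        rw [div_mul_eq_mul_div, one_mul, div_lt_one (by linarith)]
        linarith
  linarith
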